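/- Let L be the pre-Lie algebra A_a (a ∈ ℂ) or B_b on E = ⊕_{i∈ℤ} ℂe_i. If v ∈ L is such that the right multiplication R_v : x ↦ x∘v is a locally finite endomorphism of L (every vector lies in a finite-dimensional R_v-invariant subspace), then v is a scalar multiple of e_0. -/

import Mathlib

/-- The bilinear product on `E = ⊕_{i∈ℤ} ℂ e_i` determined on basis elements by
`e_i ∘ e_j = c i j • e_{i+j}`. -/
noncomputable def gradedProd (c : ℤ → ℤ → ℂ) (x y : ℤ →₀ ℂ) : ℤ →₀ ℂ :=
  x.sum fun i xi => y.sum fun j yj => Finsupp.single (i + j) (xi * yj * c i j)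

/-- The product of the pre-Lie algebra `A_a`: `e_i ∘ e_j = (1 + a i) e_{i+j}`. -/
noncomputable def mulA (a : ℂ) (x y : ℤ →₀ ℂ) : ℤ →₀ ℂ :=
  gradedProd (fun i _ => 1 + a * i) x y

/-- The product of the pre-Lie algebra `B_b`: `e_i ∘ e_j = (i/(1 + b j)) e_{i+j}`. -/
noncomputable def mulB (b : ℂ) (x y : ℤ →₀ ℂ) : ℤ →₀ ℂ :=
  gradedProd (fun i j => (i : ℂ) / (1 + b * j)) x y

lemma gradedProd_apply (c : ℤ → ℤ → ℂ) (x v : ℤ →₀ ℂ) (q : ℤ) :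
    gradedProd c x v q = ∑ i ∈ x.support, x i * v (q - i) * c i (q - i) := by
  rw [gradedProd, Finsupp.sum, Finsupp.finset_sum_apply]
  refine Finset.sum_congr rfl fun i _ => ?_
  rw [Finsupp.sum, Finsupp.finset_sum_apply]
  rw [Finset.sum_congr rfl (fun j _ => Finsupp.single_apply (a := i + j))]
  have : ∀ j ∈ v.support, (if i + j = q then x i * v j * c i j else 0)
      = if j = q - i then x i * v j * c i j else 0 := by
    intro j _
    congr 1
    simp only [eq_iff_iff]; omega
  rw [Finset.sum_congr rfl this, Finset.sum_ite_eq' v.support (q - i)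
    (fun j => x i * v j * c i j)]
  split
  · rfl
  · next h => rw [Finsupp.notMem_support_iff.mp h]; ring

/-- Leading coefficient of the product, relative to a sign `s`. -/
lemma gradedProd_top (c : ℤ → ℤ → ℂ) (x v : ℤ →₀ ℂ) (s p M : ℤ)
    (hs : s = 1 ∨ s = -1)
    (hx : ∀ q : ℤ, s * (q - p) > 0 → x q = 0)
    (hv : ∀ j : ℤ, s * (j - M) > 0 → v j = 0) :
    gradedProd c x v (p + M) = x p * v M * c p M := by
  rw [gradedProd_apply]
  by_cases hp : p ∈ x.support
  · rw [Finset.sum_eq_single_of_mem p hp ?_]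
    · norm_num
    · intro i _ hip
      rcases lt_trichotomy (s * (i - p)) 0 with h | h | h
      · have : v (p + M - i) = 0 := by
          apply hv
          rcases hs with rfl | rfl <;> nlinarith
        rw [this]; ring
      · exfalso; apply hip; rcases hs with rfl | rfl <;> nlinarith
      · rw [hx i (by linarith)]; ring
  · rw [Finsupp.notMem_support_iff.mp hp]
    rw [Finset.sum_eq_zero]
    · ring
    · intro i hi
      have hip : i ≠ p := fun h => hp (h ▸ hi)
      rcases lt_trichotomy (s * (i - p)) 0 with h | h | h
      · have : v (p + M - i) = 0 := by
          apply hv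
          rcases hs with rfl | rfl <;> nlinarith
        rw [this]; ring
      · exfalso; apply hip; rcases hs with rfl | rfl <;> nlinarith
      · rw [hx i (by linarith)]; ring

/-- Vanishing beyond the leading term. -/
lemma gradedProd_beyond (c : ℤ → ℤ → ℂ) (x v : ℤ →₀ ℂ) (s p M : ℤ)
    (hs : s = 1 ∨ s = -1)
    (hx : ∀ q : ℤ, s * (q - p) > 0 → x q = 0)
    (hv : ∀ j : ℤ, s * (j - M) > 0 → v j = 0) :
    ∀ q : ℤ, s * (q - (p + M)) > 0 → gradedProd c x v q = 0 := by
  intro q hq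
  rw [gradedProd_apply]
  apply Finset.sum_eq_zero
  intro i _
  rcases le_or_gt (s * (i - p)) 0 with h | h
  · have : v (q - i) = 0 := by
      apply hv
      rcases hs with rfl | rfl <;> nlinarith
    rw [this]; ring
  · rw [hx i h]; ring

/-- The iterates of right multiplication, starting from `e_i`, keep an extremal
nonzero coefficient which moves by `M` at each step. -/
lemma iterate_extremal (c : ℤ → ℤ → ℂ) (v : ℤ →₀ ℂ) (s M i : ℤ)
    (hs : s = 1 ∨ s = -1)
    (hv : ∀ j : ℤ, s * (j - M) > 0 → v j = 0)
    (hvM : v M ≠ 0)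
    (hc : ∀ k : ℕ, c (i + k * M) M ≠ 0) :
    ∀ n : ℕ,
      ((fun w => gradedProd c w v)^[n] (Finsupp.single i 1)) (i + n * M) ≠ 0 ∧
      ∀ q : ℤ, s * (q - (i + n * M)) > 0 →
        ((fun w => gradedProd c w v)^[n] (Finsupp.single i 1)) q = 0 := by
  intro n
  induction n with
  | zero =>
    constructor
    · simp
    · intro q hq
      have hqi : q ≠ i := by rcases hs with rfl | rfl <;> intro h <;> omega
      rw [Function.iterate_zero_apply, Finsupp.single_apply,
        if_neg (fun h => hqi h.symm)]
  | succ n ih =>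
    obtain ⟨h1, h2⟩ := ih
    have hpm : i + (n : ℤ) * M + M = i + ((n : ℕ) + 1 : ℕ) * M := by push_cast; ring
    rw [Function.iterate_succ_apply']
    constructor
    · rw [← hpm, gradedProd_top c _ v s (i + n * M) M hs h2 hv]
      exact mul_ne_zero (mul_ne_zero h1 hvM) (hc n)
    · intro q hq
      apply gradedProd_beyond c _ v s (i + n * M) M hs h2 hv
      rw [hpm]
      exact hq

/-- A finite-dimensional submodule of `ℤ →₀ ℂ` has uniformly finite support. -/
lemma exists_finset_support_subset (S : Submodule ℂ (ℤ →₀ ℂ))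
    (h : FiniteDimensional ℂ S) :
    ∃ F : Finset ℤ, ∀ x ∈ S, x.support ⊆ F := by
  obtain ⟨T, hT⟩ := (Submodule.fg_iff_finiteDimensional S).mpr h
  refine ⟨T.sup Finsupp.support, fun x hx => ?_⟩
  rw [← hT] at hx
  obtain ⟨f, -, hf⟩ := Submodule.mem_span_finset.mp hx
  intro a ha
  rw [← hf] at ha
  obtain ⟨y, hy, hay⟩ := Finsupp.mem_support_finset_sum a ha
  have : a ∈ y.support := by
    have := Finsupp.support_smul (g := y) (b := f y)
    exact this hay
  exact Finset.le_sup (f := Finsupp.support) hy this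

/-- If `L` is one of the `A_a` or `B_b` and the right multiplication `R_v` by `v`
is locally finite, then `v` is proportional to `e_0`. -/
theorem locally_finite_right_mul (mul : (ℤ →₀ ℂ) → (ℤ →₀ ℂ) → (ℤ →₀ ℂ))
    (hL : (∃ a : ℂ, mul = mulA a) ∨
      (∃ b : ℂ, (∀ n : ℤ, n ≠ 0 → b ≠ (n : ℂ)⁻¹) ∧ mul = mulB b))
    (v : ℤ →₀ ℂ)
    (hlf : ∀ x : ℤ →₀ ℂ, FiniteDimensional ℂ
      (Submodule.span ℂ (Set.range fun n : ℕ => (fun w => mul w v)^[n] x))) :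
    ∃ c : ℂ, v = Finsupp.single 0 c := by
  -- Reduce to showing the support is contained in {0}.
  suffices hsupp : ∀ m : ℤ, m ≠ 0 → v m = 0 by
    refine ⟨v 0, ?_⟩
    ext q
    rcases eq_or_ne q 0 with rfl | hq
    · simp
    · rw [hsupp q hq, Finsupp.single_apply, if_neg (by omega)]
  -- write mul as gradedProd c
  obtain ⟨c, rfl, hcprop⟩ : ∃ c : ℤ → ℤ → ℂ, mul = gradedProd c ∧
      ∀ M : ℤ, M ≠ 0 → ∃ i : ℤ, ∀ k : ℕ, c (i + k * M) M ≠ 0 := by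
    rcases hL with ⟨a, rfl⟩ | ⟨b, hb, rfl⟩
    · refine ⟨fun i _ => 1 + a * i, rfl, fun M hM => ?_⟩
      by_cases ha : ∃ t : ℤ, 1 + a * t = 0
      · obtain ⟨t, ht⟩ := ha
        have ha0 : a ≠ 0 := by
          intro h; rw [h] at ht; simp at ht
        set d : ℤ := if 0 < M then 1 else -1 with hd
        refine ⟨t + d, fun k => ?_⟩
        intro h
        simp only at h
        have hsub : a * (((t + d + (k : ℤ) * M : ℤ) : ℂ) - ((t : ℤ) : ℂ)) = 0 := by
          push_cast at h ht ⊢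
          linear_combination h - ht
        have h2 : ((t + d + (k : ℤ) * M : ℤ) : ℂ) = ((t : ℤ) : ℂ) := by
          rcases mul_eq_zero.mp hsub with h' | h'
          · exact absurd h' ha0
          · linear_combination h'
        have h3 : t + d + (k : ℤ) * M = t := by exact_mod_cast h2
        have hk : (0 : ℤ) ≤ (k : ℤ) := Int.natCast_nonneg k
        rcases lt_or_ge 0 M with hM' | hM'
        · rw [if_pos hM'] at hd; nlinarith
        · rw [if_neg (not_lt.mpr hM')] at hd
          have : M < 0 := lt_of_le_of_ne hM' hM
          nlinarith
      · push_neg at ha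
        exact ⟨0, fun k => ha _⟩
    · refine ⟨fun i j => (i : ℂ) / (1 + b * j), rfl, fun M hM => ?_⟩
      have hden : 1 + b * (M : ℂ) ≠ 0 := by
        intro h
        apply hb (-M) (by omega)
        have h1 : ((-M : ℤ) : ℂ) * b = 1 := by push_cast; linear_combination -h
        exact eq_inv_of_mul_eq_one_right h1
      refine ⟨if 0 < M then 1 else -1, fun k => ?_⟩
      have hnum : ((if 0 < M then 1 else -1) + (k : ℤ) * M : ℤ) ≠ 0 := by
        have hk : (0 : ℤ) ≤ (k : ℤ) := Int.natCast_nonneg k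
        rcases lt_or_ge 0 M with hM' | hM'
        · rw [if_pos hM']; nlinarith
        · rw [if_neg (not_lt.mpr hM')]
          have : M < 0 := lt_of_le_of_ne hM' hM
          nlinarith
      exact div_ne_zero (Int.cast_ne_zero.mpr hnum) hden
  -- main argument, by contradiction
  by_contra hbad
  push_neg at hbad
  obtain ⟨m, hm0, hmv⟩ := hbad
  have hmem : m ∈ v.support := Finsupp.mem_support_iff.mpr hmv
  have hne : v.support.Nonempty := ⟨m, hmem⟩
  -- choose the extremal degree M and sign s
  obtain ⟨s, M, hs, hvM, hv⟩ : ∃ s M : ℤ, (s = 1 ∨ s = -1) ∧ (v M ≠ 0 ∧ M ≠ 0) ∧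
      (∀ j : ℤ, s * (j - M) > 0 → v j = 0) := by
    rcases eq_or_ne (v.support.max' hne) 0 with hmax | hmax
    · refine ⟨-1, v.support.min' hne, Or.inr rfl, ⟨?_, ?_⟩, ?_⟩
      · exact Finsupp.mem_support_iff.mp (v.support.min'_mem hne)
      · intro h
        have h1 := v.support.min'_le m hmem
        have h2 := v.support.le_max' m hmem
        omega
      · intro j hj
        by_contra hvj
        have := v.support.min'_le j (Finsupp.mem_support_iff.mpr hvj)
        omega
    · refine ⟨1, v.support.max' hne, Or.inl rfl, ⟨?_, hmax⟩, ?_⟩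
      · exact Finsupp.mem_support_iff.mp (v.support.max'_mem hne)
      · intro j hj
        by_contra hvj
        have := v.support.le_max' j (Finsupp.mem_support_iff.mpr hvj)
        omega
  obtain ⟨i, hc⟩ := hcprop M hvM.2
  have hiter := iterate_extremal c v s M i hs hv hvM.1 hc
  obtain ⟨F, hF⟩ := exists_finset_support_subset _ (hlf (Finsupp.single i 1))
  have hmemF : ∀ n : ℕ, (i + n * M) ∈ F := by
    intro n
    apply hF _ (Submodule.subset_span ⟨n, rfl⟩)
    exact Finsupp.mem_support_iff.mpr (hiter n).1
  have hinj : Function.Injective (fun n : ℕ => i + n * M) := by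
    intro n m h
    simp only at h
    have : (n : ℤ) * M = (m : ℤ) * M := by omega
    have := mul_right_cancel₀ hvM.2 this
    exact_mod_cast this
  have : (Set.range fun n : ℕ => i + n * M).Infinite := Set.infinite_range_of_injective hinj
  apply this
  apply Set.Finite.subset F.finite_toSet
  rintro _ ⟨n, rfl⟩
  exact hmemF n
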